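/- arXiv:1810.10461 — 7 statements merged into one kernel-verified Lean document; each statement's English description precedes it below -/
import Mathlib

section
/- If A is a subset of an Abelian group G and A is 2-stable (does not have the 2-order property) and A is nonempty, then A satisfies A + A - A ⊆ A, i.e., for all x, y, z in A, y + z - x is in A. -/
/-- `A ⊆ G` has the `k`-order property if there are `a, b ∈ G^k`
with `a i + b j ∈ A` iff `i ≤ j`. -/
def HasOrderProperty {G : Type*} [AddCommGroup G] (A : Set G) (k : ℕ) : Prop :=
  ∃ a b : Fin k → G, ∀ i j : Fin k, (a i + b j ∈ A ↔ i ≤ j)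

theorem two_stable_closed {G : Type*} [AddCommGroup G] (A : Set G)
    (hstab : ¬ HasOrderProperty A 2) (hne : A.Nonempty) :
    ∀ x ∈ A, ∀ y ∈ A, ∀ z ∈ A, y + z - x ∈ A := by
  intro x hx y hy z hz
  by_contra h
  apply hstab
  refine ⟨![0, y - x], ![z, x], ?_⟩
  intro i j
  fin_cases i <;> fin_cases j <;>
    simp_all [sub_add_eq_add_sub, add_sub_assoc, Fin.le_def]
end

section
/- If A is a Sidon set in an Abelian group G, then A is 3-stable (does not have the 3-order property). -/
/-- `A` is a Sidon set if `x - y = z - w` with all four in `A` forces `x = y` or `x = z`. -/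
def IsSidon {G : Type*} [AddCommGroup G] (A : Set G) : Prop :=
  ∀ x ∈ A, ∀ y ∈ A, ∀ z ∈ A, ∀ w ∈ A, x - y = z - w → x = y ∨ x = z

theorem sidon_three_stable {G : Type*} [AddCommGroup G] (A : Set G)
    (hA : IsSidon A) : ¬ HasOrderProperty A 3 := by
  rintro ⟨a, b, h⟩
  have h12 : a 1 + b 2 ∈ A := (h 1 2).2 (by decide)
  have h02 : a 0 + b 2 ∈ A := (h 0 2).2 (by decide)
  have h11 : a 1 + b 1 ∈ A := (h 1 1).2 (by decide)
  have h01 : a 0 + b 1 ∈ A := (h 0 1).2 (by decide)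
  have key : a 1 + b 2 - (a 0 + b 2) = a 1 + b 1 - (a 0 + b 1) := by abel
  rcases hA _ h12 _ h02 _ h11 _ h01 key with h' | h'
  · have ha : a 1 = a 0 := add_right_cancel h'
    have h00 : a 0 + b 0 ∈ A := (h 0 0).2 (by decide)
    rw [← ha] at h00
    exact absurd ((h 1 0).1 h00) (by decide)
  · have hb : b 2 = b 1 := add_left_cancel h'
    have h22 : a 2 + b 2 ∈ A := (h 2 2).2 (by decide)
    rw [hb] at h22
    exact absurd ((h 2 1).1 h22) (by decide)
end

section
/- If H is a subgroup of an Abelian group G and S is a union of s cosets of H, then S is (s+1)-stable, i.e., S does not have the (s+1)-order property. -/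
theorem union_cosets_stable {G : Type*} [AddCommGroup G] (H : AddSubgroup G)
    (s : ℕ) (T : Finset G) (hT : T.card = s) (S : Set G)
    (hS : S = ⋃ g ∈ T, (fun h => g + h) '' (H : Set G)) :
    ¬ HasOrderProperty S (s + 1) := by
  subst hT
  subst hS
  rintro ⟨a, b, hab⟩
  have h0 : ∀ i : Fin (T.card + 1), ∃ g ∈ T, ∃ h ∈ H, g + h = a 0 + b i := by
    intro i
    have := (hab 0 i).2 (Fin.zero_le i)
    simp only [Set.mem_iUnion, Set.mem_image] at this
    obtain ⟨g, hg, h, hh, e⟩ := this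
    exact ⟨g, hg, h, hh, e⟩
  choose g hg h hh hgh using h0
  have main : ∀ i j : Fin (T.card + 1), g i = g j → j ≤ i := by
    intro i j hgij
    have hbij : b i - b j ∈ H := by
      have : b i - b j = h i - h j := by
        have e1 := hgh i
        have e2 := hgh j
        rw [hgij] at e1
        have h3 : (g j + h i) - (g j + h j) = (a 0 + b i) - (a 0 + b j) := by rw [e1, e2]
        rw [add_sub_add_left_eq_sub, add_sub_add_left_eq_sub] at h3
        exact h3.symm
      rw [this]
      exact H.sub_mem (hh i) (hh j)
    have hjj : a j + b j ∈ ⋃ g ∈ T, (fun h => g + h) '' (H : Set G) :=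
      (hab j j).2 le_rfl
    have hji : a j + b i ∈ ⋃ g ∈ T, (fun h => g + h) '' (H : Set G) := by
      simp only [Set.mem_iUnion, Set.mem_image] at hjj ⊢
      obtain ⟨g', hg', h', hh', e⟩ := hjj
      exact ⟨g', hg', h' + (b i - b j), H.add_mem hh' hbij, by rw [← add_assoc, e]; abel⟩
    exact (hab j i).1 hji
  have hcard : Fintype.card ((T : Finset G) : Type _) < Fintype.card (Fin (T.card + 1)) := by
    simp
  obtain ⟨i, j, hij, hfij⟩ :=
    Fintype.exists_ne_map_eq_of_card_lt (fun i : Fin (T.card + 1) => (⟨g i, hg i⟩ : T)) hcard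
  have hgij : g i = g j := congrArg Subtype.val hfij
  exact hij (le_antisymm (main j i hgij.symm) (main i j hgij))
end

section
/- Let A_1, ..., A_m be subsets of an Abelian group G and let N = r(k_1+1, ..., k_m+1) be the multicolour Ramsey number. If the union A_1 ∪ ... ∪ A_m has the (N+1)-order property, then there exists some q with 1 ≤ q ≤ m such that A_q has the k_q-order property. -/
/-- `N` is Ramsey for sizes `k : Fin m → ℕ`: every `m`-colouring of the edges of the
complete graph on `N` vertices has, for some colour `q`, a complete subgraph on
`k q` vertices all of whose edges have colour `q`. -/
def IsRamseyNumber {m : ℕ} (k : Fin m → ℕ) (N : ℕ) : Prop :=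
  ∀ c : Fin N → Fin N → Fin m, ∃ q : Fin m, ∃ f : Fin (k q) → Fin N,
    StrictMono f ∧ ∀ i j : Fin (k q), i < j → c (f i) (f j) = q

/-- The multicolour Ramsey number `r(k₁, …, k_m)`. -/
noncomputable def ramseyNumber {m : ℕ} (k : Fin m → ℕ) : ℕ :=
  sInf {N | IsRamseyNumber k N}

lemma isRamsey_one_zero (k : Fin 0 → ℕ) : IsRamseyNumber k 1 :=
  fun c => (c 0 0).elim0

lemma isRamsey_one_of_le_one {m : ℕ} (k : Fin m → ℕ) (q : Fin m) (hq : k q ≤ 1) :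
    IsRamseyNumber k 1 := by
  intro c
  refine ⟨q, fun _ => 0, ?_, ?_⟩ <;>
    · intro i j hij
      exact absurd (Fin.lt_def.mp hij) (by have := j.isLt; omega)

lemma ramsey_exists (s : ℕ) : ∀ (m : ℕ) (k : Fin m → ℕ), (∑ q, k q) ≤ s →
    ∃ N, IsRamseyNumber k N := by
  induction s with
  | zero =>
    intro m k hk
    rcases Nat.eq_zero_or_pos m with hm | hm
    · subst hm; exact ⟨1, isRamsey_one_zero k⟩
    · have q0 : Fin m := ⟨0, hm⟩
      refine ⟨1, isRamsey_one_of_le_one k q0 ?_⟩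
      have : k q0 ≤ ∑ q, k q := Finset.single_le_sum (fun q _ => Nat.zero_le _)
        (Finset.mem_univ q0)
      omega
  | succ s ih =>
    intro m k hk
    rcases Nat.eq_zero_or_pos m with hm | hm
    · subst hm; exact ⟨1, isRamsey_one_zero k⟩
    by_cases h1 : ∃ q, k q ≤ 1
    · obtain ⟨q, hq⟩ := h1
      exact ⟨1, isRamsey_one_of_le_one k q hq⟩
    push_neg at h1
    -- every k q ≥ 2
    have hdec : ∀ q : Fin m, ∃ Nq,
        IsRamseyNumber (Function.update k q (k q - 1)) Nq := by
      intro q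
      apply ih
      have hupd := Finset.sum_update_of_mem (Finset.mem_univ q) k (k q - 1)
      have hsplit := Finset.sum_eq_sum_sdiff_singleton_add (Finset.mem_univ q) k
      have h2 := h1 q
      omega
    choose Nf hNf using hdec
    set T : ℕ := ∑ q, Nf q with hT
    refine ⟨T + 1, ?_⟩
    intro c
    set g : Fin T → Fin m := fun v => c 0 v.succ with hg
    set S : Fin m → Finset (Fin T) := fun q => Finset.univ.filter (fun v => g v = q)
      with hS
    have hsum : ∑ q, (S q).card = T := by
      have := Finset.card_eq_sum_card_fiberwise
        (f := g) (s := Finset.univ) (t := Finset.univ)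
        (fun x _ => Finset.mem_univ (g x))
      simpa [hS, Finset.card_univ] using this.symm
    have hexq : ∃ q, Nf q ≤ (S q).card := by
      by_contra hcon
      push_neg at hcon
      have hlt : ∑ q, (S q).card < ∑ q, Nf q :=
        Finset.sum_lt_sum_of_nonempty
          (Finset.univ_nonempty_iff.mpr ⟨⟨0, hm⟩⟩) (fun q _ => hcon q)
      omega
    obtain ⟨q, hq⟩ := hexq
    obtain ⟨t, hts, htcard⟩ := Finset.exists_subset_card_eq hq
    set e := t.orderEmbOfFin htcard with he
    have hemem : ∀ x, g (e x) = q := by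
      intro x
      have : e x ∈ S q := hts (t.orderEmbOfFin_mem htcard x)
      simpa [hS] using this
    obtain ⟨q', f, hfmono, hfcol⟩ :=
      hNf q (fun x y => c (e x).succ (e y).succ)
    by_cases hqq : q' = q
    · -- extend the clique by the vertex 0
      subst hqq
      have hkq : Function.update k q' (k q' - 1) q' = k q' - 1 :=
        Function.update_self _ _ _
      have hbound : ∀ i : Fin (k q'), i.val ≠ 0 →
          i.val - 1 < Function.update k q' (k q' - 1) q' := by
        intro i hi; rw [hkq]; have := i.isLt; omega
      refine ⟨q', fun i => if h : i.val = 0 then 0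
        else (e (f ⟨i.val - 1, hbound i h⟩)).succ, ?_, ?_⟩
      · intro i j hij
        have hij' := Fin.lt_def.mp hij
        by_cases hi : i.val = 0
        · have hj : ¬ j.val = 0 := by omega
          simp only [hi, dif_pos, hj, dif_neg, not_false_iff]
          exact Fin.succ_pos _
        · have hj : ¬ j.val = 0 := by omega
          simp only [hi, hj, dif_neg, not_false_iff]
          have h1 : (⟨i.val - 1, hbound i hi⟩ : Fin _) < ⟨j.val - 1, hbound j hj⟩ := by
            rw [Fin.lt_def]; simp; omega
          have := e.strictMono (hfmono h1)
          exact Fin.succ_lt_succ_iff.mpr this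
      · intro i j hij
        have hij' := Fin.lt_def.mp hij
        by_cases hi : i.val = 0
        · have hj : ¬ j.val = 0 := by omega
          simp only [hi, dif_pos, hj, dif_neg, not_false_iff]
          exact hemem _
        · have hj : ¬ j.val = 0 := by omega
          simp only [hi, hj, dif_neg, not_false_iff]
          have h1 : (⟨i.val - 1, hbound i hi⟩ : Fin _) < ⟨j.val - 1, hbound j hj⟩ := by
            rw [Fin.lt_def]; simp; omega
          exact hfcol _ _ h1
    · -- the clique already has the right size in colour q'
      have hkq : Function.update k q (k q - 1) q' = k q' :=
        Function.update_of_ne hqq _ _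
      have hbound : ∀ i : Fin (k q'), i.val < Function.update k q (k q - 1) q' := by
        intro i; rw [hkq]; exact i.isLt
      refine ⟨q', fun i => (e (f ⟨i.val, hbound i⟩)).succ, ?_, ?_⟩
      · intro i j hij
        have h1 : (⟨i.val, hbound i⟩ : Fin _) < ⟨j.val, hbound j⟩ := hij
        exact Fin.succ_lt_succ_iff.mpr (e.strictMono (hfmono h1))
      · intro i j hij
        have h1 : (⟨i.val, hbound i⟩ : Fin _) < ⟨j.val, hbound j⟩ := hij
        exact hfcol _ _ h1

lemma isRamsey_ramseyNumber {m : ℕ} (k : Fin m → ℕ) :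
    IsRamseyNumber k (ramseyNumber k) := by
  have h : {N | IsRamseyNumber k N}.Nonempty := ramsey_exists (∑ q, k q) m k le_rfl
  exact Nat.sInf_mem h

theorem multicolour_order_property {G : Type*} [AddCommGroup G] {m : ℕ}
    (A : Fin m → Set G) (k : Fin m → ℕ) (N : ℕ)
    (hN : N = ramseyNumber (fun q => k q + 1))
    (h : HasOrderProperty (⋃ q, A q) (N + 1)) :
    ∃ q : Fin m, HasOrderProperty (A q) (k q) := by
  obtain ⟨a, b, hab⟩ := h
  rcases Nat.eq_zero_or_pos m with hm | hm
  · subst hm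
    have : a 0 + b 0 ∈ ⋃ q : Fin 0, A q := (hab 0 0).mpr le_rfl
    simp at this
  have q0 : Fin m := ⟨0, hm⟩
  classical
  set c : Fin N → Fin N → Fin m := fun i j =>
    if h : ∃ q, a i.succ + b j.castSucc ∈ A q then h.choose else q0 with hc
  obtain ⟨q, f, hfmono, hfcol⟩ := (hN ▸ isRamsey_ramseyNumber (fun q => k q + 1)) c
  refine ⟨q, fun i => a (f i.castSucc).succ, fun j => b (f j.succ).castSucc, ?_⟩
  intro i j
  constructor
  · intro hmem
    by_contra hij
    push_neg at hij
    have h1 : j.succ ≤ i.castSucc := Fin.succ_le_castSucc_iff.mpr hij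
    have h2 : f j.succ ≤ f i.castSucc := hfmono.monotone h1
    have h3 : ¬ ((f i.castSucc).succ ≤ (f j.succ).castSucc) := by
      rw [Fin.succ_le_castSucc_iff]; exact not_lt.mpr h2
    have h4 : a (f i.castSucc).succ + b (f j.succ).castSucc ∉ ⋃ q, A q := by
      rw [hab]; exact h3
    exact h4 (Set.mem_iUnion.mpr ⟨q, hmem⟩)
  · intro hij
    have h1 : i.castSucc < j.succ := Fin.castSucc_lt_succ_iff.mpr hij
    have h2 : f i.castSucc < f j.succ := hfmono h1
    have h3 : (f i.castSucc).succ ≤ (f j.succ).castSucc :=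
      Fin.succ_le_castSucc_iff.mpr h2
    have hex : ∃ q', a (f i.castSucc).succ + b (f j.succ).castSucc ∈ A q' := by
      have := (hab _ _).mpr h3
      exact Set.mem_iUnion.mp this
    have hcval : c (f i.castSucc) (f j.succ) = hex.choose := dif_pos hex
    have := hfcol i.castSucc j.succ h1
    rw [hcval] at this
    have hspec := hex.choose_spec
    rw [this] at hspec
    exact hspec
end

section
/- Let M be the k × k real tridiagonal matrix with M_{11} = 1, M_{ii} = 2 for i ≥ 2, M_{i,i+1} = M_{i+1,i} = -1, and 0 elsewhere. Then the eigenvalues of M are exactly 4 cos²(πj/(2k+1)) for j = 1, ..., k. -/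
open Real Matrix

set_option maxHeartbeats 1000000

private lemma charpoly_eval_aux {n : Type*} [Fintype n] [DecidableEq n]
    (M : Matrix n n ℝ) (μ : ℝ) :
    M.charpoly.eval μ = (μ • (1 : Matrix n n ℝ) - M).det := by
  rw [Matrix.charpoly, ← Polynomial.coe_evalRingHom, RingHom.map_det]
  congr 1
  ext i j
  by_cases h : i = j
  · subst h
    simp [Matrix.charmatrix_apply_eq, Matrix.one_apply]
  · simp [Matrix.charmatrix_apply_ne _ _ _ h, Matrix.one_apply_ne h]

private lemma key_eigen (k : ℕ) (hk : 1 ≤ k)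
    (M : Matrix (Fin k) (Fin k) ℝ)
    (hM : ∀ i j : Fin k, M i j =
      if i = j then (if (i : ℕ) = 0 then 1 else 2)
      else if (i : ℕ) + 1 = (j : ℕ) ∨ (j : ℕ) + 1 = (i : ℕ) then -1 else 0)
    (j : Fin k) :
    ∃ v : Fin k → ℝ, v ≠ 0 ∧
      M.mulVec v = (4 * Real.cos (π * ((j : ℕ) + 1) / (2 * k + 1)) ^ 2) • v := by
  set α : ℝ := π * ((j : ℕ) + 1) / (2 * k + 1) with hα
  set θ : ℝ := π - 2 * α with hθ
  set w : ℕ → ℝ := fun n => Real.cos (((n : ℝ) + 1/2) * θ) with hw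
  set μ : ℝ := 2 - 2 * Real.cos θ with hμdef
  have hkpos : (0:ℝ) < 2 * (k:ℝ) + 1 := by positivity
  have hμ : μ = 4 * Real.cos α ^ 2 := by
    have h1 : Real.cos θ = -Real.cos (2 * α) := by rw [hθ, Real.cos_pi_sub]
    rw [hμdef, h1, Real.cos_two_mul]; ring
  have hA : ∀ n : ℕ, w n + w (n + 2) = 2 * Real.cos θ * w (n + 1) := by
    intro n
    simp only [hw]
    push_cast
    rw [show ((n : ℝ) + 1/2) * θ = (((n:ℝ) + 1) + 1/2) * θ - θ by ring,
        show ((n : ℝ) + 2 + 1/2) * θ = (((n:ℝ) + 1) + 1/2) * θ + θ by ring,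
        Real.cos_sub, Real.cos_add]
    ring
  have hB : w 0 - w 1 = μ * w 0 := by
    simp only [hw, hμdef]
    push_cast
    have hc : Real.cos θ = 2 * Real.cos (θ/2) ^ 2 - 1 := by
      rw [show θ = 2 * (θ/2) by ring] ; rw [Real.cos_two_mul] ; ring_nf
    have hs : Real.sin θ = 2 * Real.sin (θ/2) * Real.cos (θ/2) := by
      rw [show θ = 2 * (θ/2) by ring] ; rw [Real.sin_two_mul] ; ring_nf
    rw [show ((0:ℝ) + 1/2) * θ = θ/2 by ring, show ((1:ℝ) + 1/2) * θ = θ/2 + θ by ring,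
        Real.cos_add, hc, hs]
    linear_combination 2 * Real.cos (θ/2) * Real.sin_sq_add_cos_sq (θ/2)
  have hC : w k = 0 := by
    simp only [hw]
    rw [Real.cos_eq_zero_iff]
    refine ⟨(k : ℤ) - 1 - (j : ℕ), ?_⟩
    rw [hθ, hα]
    have hne : (2 * (k:ℝ) + 1) ≠ 0 := ne_of_gt hkpos
    field_simp
    push_cast
    ring
  set v : Fin k → ℝ := fun i => w (i : ℕ) with hv
  have hv0 : v ⟨0, hk⟩ ≠ 0 := by
    simp only [hv, hw]
    push_cast
    rw [show ((0:ℝ) + 1/2) * θ = π/2 - α by rw [hθ]; ring, Real.cos_pi_div_two_sub]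
    have h1 : 0 < α := by rw [hα]; positivity
    have h2 : α < π := by
      rw [hα, div_lt_iff₀ hkpos]
      have hjk : ((j:ℕ):ℝ) + 1 ≤ (k:ℝ) := by exact_mod_cast Nat.succ_le_of_lt j.isLt
      nlinarith [Real.pi_pos]
    exact ne_of_gt (Real.sin_pos_of_pos_of_lt_pi h1 h2)
  have hrow : ∀ i : Fin k, (M.mulVec v) i = μ * v i := by
    intro i
    have hsplit : ∀ jj : Fin k, M i jj * v jj =
        (if jj = i then (if (i : ℕ) = 0 then 1 else 2) * v i else 0)
        + ((if (jj : ℕ) = (i : ℕ) + 1 then -v jj else 0)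
        + (if (jj : ℕ) + 1 = (i : ℕ) then -v jj else 0)) := by
      intro jj
      rw [hM]
      by_cases h1 : i = jj
      · subst h1
        rw [if_pos rfl, if_pos rfl, if_neg (by omega : ¬((i:ℕ) = (i:ℕ)+1)),
            if_neg (by omega : ¬((i:ℕ)+1 = (i:ℕ)))]
        ring
      · rw [if_neg h1, if_neg (Ne.symm h1)]
        by_cases h2 : (i : ℕ) + 1 = (jj : ℕ)
        · rw [if_pos (Or.inl h2), if_pos h2.symm,
              if_neg (by omega : ¬((jj:ℕ)+1 = (i:ℕ)))]
          ring
        · by_cases h3 : (jj : ℕ) + 1 = (i : ℕ)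
          · rw [if_pos (Or.inr h3), if_neg (by omega : ¬((jj:ℕ) = (i:ℕ)+1)), if_pos h3]
            ring
          · rw [if_neg (by tauto), if_neg (by omega : ¬((jj:ℕ) = (i:ℕ)+1)), if_neg h3]
            ring
    have hsum : (M.mulVec v) i = ∑ jj : Fin k, M i jj * v jj := rfl
    rw [hsum]
    simp_rw [hsplit]
    rw [Finset.sum_add_distrib, Finset.sum_add_distrib]
    have e1 : (∑ jj : Fin k, if jj = i then (if (i : ℕ) = 0 then 1 else 2) * v i else 0)
        = (if (i : ℕ) = 0 then 1 else 2) * v i := by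
      rw [Finset.sum_ite_eq' Finset.univ i]
      simp
    have e2 : (∑ jj : Fin k, if (jj : ℕ) = (i : ℕ) + 1 then -v jj else 0)
        = -w ((i : ℕ) + 1) := by
      by_cases h : (i : ℕ) + 1 < k
      · have hcond : ∀ jj : Fin k, ((jj : ℕ) = (i : ℕ) + 1) ↔ jj = ⟨(i:ℕ)+1, h⟩ := by
          intro jj; rw [Fin.ext_iff]
        simp_rw [hcond]
        rw [Finset.sum_ite_eq' Finset.univ]
        simp [hv]
      · have hik : (i : ℕ) + 1 = k := by have := i.isLt; omega
        rw [Finset.sum_eq_zero (fun jj _ => if_neg (by have := jj.isLt; omega)), hik, hC,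
            neg_zero]
    have e3 : (∑ jj : Fin k, if (jj : ℕ) + 1 = (i : ℕ) then -v jj else 0)
        = (if 0 < (i : ℕ) then -w ((i : ℕ) - 1) else 0) := by
      by_cases h : 0 < (i : ℕ)
      · have h' : (i : ℕ) - 1 < k := by have := i.isLt; omega
        have hcond : ∀ jj : Fin k, ((jj : ℕ) + 1 = (i : ℕ)) ↔ jj = ⟨(i:ℕ)-1, h'⟩ := by
          intro jj; rw [Fin.ext_iff]; simp; omega
        simp_rw [hcond]
        rw [Finset.sum_ite_eq' Finset.univ, if_pos (Finset.mem_univ _), if_pos h]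
      · rw [Finset.sum_eq_zero (fun jj _ => if_neg (by omega)), if_neg h]
    rw [e1, e2, e3]
    by_cases h0 : (i : ℕ) = 0
    · have hvi : v i = w 0 := by simp only [hv]; rw [h0]
      rw [if_pos h0, if_neg (by omega), h0, show (0:ℕ) + 1 = 1 from rfl, hvi]
      linarith [hB]
    · rw [if_neg h0, if_pos (by omega : 0 < (i:ℕ))]
      have hvi : v i = w (i : ℕ) := rfl
      have hA' := hA ((i : ℕ) - 1)
      rw [show (i:ℕ) - 1 + 2 = (i:ℕ) + 1 by omega, show (i:ℕ) - 1 + 1 = (i:ℕ) by omega] at hA'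
      rw [hvi, hμdef]
      linarith [hA']
  refine ⟨v, ?_, ?_⟩
  · intro hcon
    exact hv0 (by rw [hcon]; rfl)
  · funext i
    rw [hrow i, Pi.smul_apply, smul_eq_mul, ← hμ]

theorem eigenvalues_of_halfgraph_gram (k : ℕ) (hk : 1 ≤ k)
    (M : Matrix (Fin k) (Fin k) ℝ)
    (hM : ∀ i j : Fin k, M i j =
      if i = j then (if (i : ℕ) = 0 then 1 else 2)
      else if (i : ℕ) + 1 = (j : ℕ) ∨ (j : ℕ) + 1 = (i : ℕ) then -1 else 0) :
    {μ : ℝ | ∃ v : Fin k → ℝ, v ≠ 0 ∧ M.mulVec v = μ • v} =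
      {μ : ℝ | ∃ j : Fin k, μ = 4 * Real.cos (π * ((j : ℕ) + 1) / (2 * k + 1)) ^ 2} := by
  classical
  have hkpos : (0:ℝ) < 2 * (k:ℝ) + 1 := by positivity
  have hiff : ∀ μ : ℝ, (∃ v : Fin k → ℝ, v ≠ 0 ∧ M.mulVec v = μ • v) ↔
      M.charpoly.IsRoot μ := by
    intro μ
    rw [Polynomial.IsRoot, charpoly_eval_aux,
        show μ • (1 : Matrix (Fin k) (Fin k) ℝ) - M = -(M - μ • 1) from (neg_sub _ _).symm,
        Matrix.det_neg]
    have hne : ((-1 : ℝ)) ^ Fintype.card (Fin k) ≠ 0 := pow_ne_zero _ (by norm_num)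
    constructor
    · rintro ⟨v, hv0, hv⟩
      have hz : (M - μ • 1).mulVec v = 0 := by
        rw [Matrix.sub_mulVec, hv, Matrix.smul_mulVec, Matrix.one_mulVec, sub_self]
      have hd : (M - μ • 1).det = 0 := Matrix.exists_mulVec_eq_zero_iff.mp ⟨v, hv0, hz⟩
      rw [hd, mul_zero]
    · intro h
      have hd : (M - μ • 1).det = 0 := by
        rcases mul_eq_zero.mp h with h' | h'
        · exact absurd h' hne
        · exact h'
      obtain ⟨v, hv0, hz⟩ := Matrix.exists_mulVec_eq_zero_iff.mpr hd
      refine ⟨v, hv0, ?_⟩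
      rw [Matrix.sub_mulVec, Matrix.smul_mulVec, Matrix.one_mulVec, sub_eq_zero] at hz
      exact hz
  set f : Fin k → ℝ := fun j => 4 * Real.cos (π * ((j : ℕ) + 1) / (2 * (k:ℝ) + 1)) ^ 2 with hf
  have hang : ∀ j : Fin k, 0 < π * ((j:ℕ)+1) / (2*(k:ℝ)+1) ∧
      π * ((j:ℕ)+1) / (2*(k:ℝ)+1) < π/2 := by
    intro j
    constructor
    · positivity
    · rw [div_lt_iff₀ hkpos]
      have hjk : ((j:ℕ):ℝ) + 1 ≤ (k:ℝ) := by exact_mod_cast Nat.succ_le_of_lt j.isLt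
      nlinarith [Real.pi_pos]
  have hcospos : ∀ j : Fin k, 0 < Real.cos (π * ((j:ℕ)+1) / (2*(k:ℝ)+1)) := by
    intro j
    refine Real.cos_pos_of_mem_Ioo ⟨?_, (hang j).2⟩
    have := (hang j).1
    have := Real.pi_pos
    linarith
  have hinj : Function.Injective f := by
    intro a b hab
    have hca := hcospos a
    have hcb := hcospos b
    simp only [hf] at hab
    have h2 : (Real.cos (π * ((a:ℕ)+1) / (2*(k:ℝ)+1)) - Real.cos (π * ((b:ℕ)+1) / (2*(k:ℝ)+1)))
        * (Real.cos (π * ((a:ℕ)+1) / (2*(k:ℝ)+1)) + Real.cos (π * ((b:ℕ)+1) / (2*(k:ℝ)+1)))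
        = 0 := by linear_combination hab / 4
    have h1 : Real.cos (π * ((a:ℕ)+1) / (2*(k:ℝ)+1)) = Real.cos (π * ((b:ℕ)+1) / (2*(k:ℝ)+1)) := by
      rcases mul_eq_zero.mp h2 with h | h
      · linarith
      · linarith
    have hpi := Real.pi_pos
    have hmema : π * ((a:ℕ)+1) / (2*(k:ℝ)+1) ∈ Set.Icc 0 π :=
      ⟨le_of_lt (hang a).1, by linarith [(hang a).2]⟩
    have hmemb : π * ((b:ℕ)+1) / (2*(k:ℝ)+1) ∈ Set.Icc 0 π :=
      ⟨le_of_lt (hang b).1, by linarith [(hang b).2]⟩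
    have heqang := Real.injOn_cos hmema hmemb h1
    rw [div_eq_div_iff (ne_of_gt hkpos) (ne_of_gt hkpos)] at heqang
    have h3 : ((a:ℕ):ℝ) + 1 = ((b:ℕ):ℝ) + 1 := by
      have h4 := mul_right_cancel₀ (ne_of_gt hkpos) heqang
      exact mul_left_cancel₀ Real.pi_ne_zero h4
    have h5 : ((a:ℕ):ℝ) = ((b:ℕ):ℝ) := by linarith
    exact Fin.ext (Nat.cast_injective h5)
  have hp0 : M.charpoly ≠ 0 := (Matrix.charpoly_monic M).ne_zero
  have hdeg : M.charpoly.natDegree = k := by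
    rw [Matrix.charpoly_natDegree_eq_dim, Fintype.card_fin]
  have hsub : Finset.image f Finset.univ ⊆ M.charpoly.roots.toFinset := by
    intro x hx
    rw [Multiset.mem_toFinset, Polynomial.mem_roots hp0]
    obtain ⟨j, _, rfl⟩ := Finset.mem_image.mp hx
    exact (hiff (f j)).mp (key_eigen k hk M hM j)
  have hcard1 : (Finset.image f Finset.univ).card = k := by
    rw [Finset.card_image_of_injective _ hinj, Finset.card_univ, Fintype.card_fin]
  have hcard2 : M.charpoly.roots.toFinset.card ≤ k := by
    exact le_trans (Multiset.toFinset_card_le _)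
      (le_trans M.charpoly.card_roots' (le_of_eq hdeg))
  have heq : Finset.image f Finset.univ = M.charpoly.roots.toFinset :=
    Finset.eq_of_subset_of_card_le hsub (by rw [hcard1]; exact hcard2)
  ext μ
  simp only [Set.mem_setOf_eq]
  constructor
  · intro hμ
    have hroot := (hiff μ).mp hμ
    have hμmem : μ ∈ Finset.image f Finset.univ := by
      rw [heq, Multiset.mem_toFinset, Polynomial.mem_roots hp0]
      exact hroot
    obtain ⟨j, _, hj⟩ := Finset.mem_image.mp hμmem
    exact ⟨j, hj.symm⟩
  · rintro ⟨j, rfl⟩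
    exact key_eigen k hk M hM j
end

section
/- For every k ≥ 1, ∑_{j=1}^{k} 1/(2 cos(jπ/(2k+1))) ≥ (k/π)(log k + log(16 e^γ / π) - 1/k), where γ is the Euler–Mascheroni constant. In particular the sum is at least (k/π) log(k/c_0) - 1/π with c_0 = 2^{-4} e^{-γ} π. -/
open Real Finset

noncomputable def gg (x : ℝ) : ℝ := 1 / (2 * Real.sin x) - 1 / (2 * x)
noncomputable def FF (x : ℝ) : ℝ :=
  (Real.log (Real.sin (x / 2)) - Real.log (Real.cos (x / 2)) - Real.log x) / 2

lemma hasDerivAt_FF {x : ℝ} (h0 : 0 < x) (h1 : x < π) : HasDerivAt FF (gg x) x := by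
  have hx2 : 0 < x / 2 := by linarith
  have hx2' : x / 2 < π / 2 := by linarith
  have hs : 0 < Real.sin (x / 2) := Real.sin_pos_of_pos_of_lt_pi hx2 (by linarith [Real.pi_pos])
  have hc : 0 < Real.cos (x / 2) := Real.cos_pos_of_mem_Ioo ⟨by linarith, hx2'⟩
  have hhalf : HasDerivAt (fun t : ℝ => t / 2) (1 / 2) x := by
    simpa using (hasDerivAt_id x).div_const 2
  have hsin : HasDerivAt (fun t : ℝ => Real.sin (t / 2)) (Real.cos (x / 2) * (1 / 2)) x :=
    by have := (Real.hasDerivAt_sin (x / 2)).comp x hhalf; exact this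
  have hcos : HasDerivAt (fun t : ℝ => Real.cos (t / 2)) (-Real.sin (x / 2) * (1 / 2)) x :=
    by have := (Real.hasDerivAt_cos (x / 2)).comp x hhalf; exact this
  have hls : HasDerivAt (fun t : ℝ => Real.log (Real.sin (t / 2)))
      ((Real.sin (x / 2))⁻¹ * (Real.cos (x / 2) * (1 / 2))) x :=
    by have := (Real.hasDerivAt_log hs.ne').comp x hsin; exact this
  have hlc : HasDerivAt (fun t : ℝ => Real.log (Real.cos (t / 2)))
      ((Real.cos (x / 2))⁻¹ * (-Real.sin (x / 2) * (1 / 2))) x :=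
    by have := (Real.hasDerivAt_log hc.ne').comp x hcos; exact this
  have hlx : HasDerivAt Real.log x⁻¹ x := Real.hasDerivAt_log h0.ne'
  have h := ((hls.sub hlc).sub hlx).div_const 2
  refine h.congr_deriv ?_
  have hx : (2:ℝ) * (x / 2) = x := by ring
  have hsinx : Real.sin x = 2 * Real.sin (x / 2) * Real.cos (x / 2) := by
    conv_lhs => rw [← hx, Real.sin_two_mul]
  have hpyth := Real.sin_sq_add_cos_sq (x / 2)
  have key : (Real.sin (x/2))⁻¹ * (Real.cos (x/2) * (1/2))
      - (Real.cos (x/2))⁻¹ * (-Real.sin (x/2) * (1/2))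
      = 1 / (2 * Real.sin (x/2) * Real.cos (x/2)) := by
    field_simp
    linear_combination hpyth
  rw [show gg x = 1 / (2 * Real.sin x) - 1 / (2 * x) from rfl, hsinx, key]
  ring

lemma hasDerivAt_gg {x : ℝ} (h0 : 0 < x) (h1 : x < π) :
    HasDerivAt gg (1 / (2 * x ^ 2) - Real.cos x / (2 * Real.sin x ^ 2)) x := by
  have hs : 0 < Real.sin x := Real.sin_pos_of_pos_of_lt_pi h0 h1
  have h2s : (2 * Real.sin x) ≠ 0 := by positivity
  have h2x : (2 * x) ≠ 0 := by positivity
  have ha : HasDerivAt (fun t : ℝ => 2 * Real.sin t) (2 * Real.cos x) x :=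
    (Real.hasDerivAt_sin x).const_mul 2
  have hb : HasDerivAt (fun t : ℝ => 2 * t) 2 x := by
    simpa using (hasDerivAt_id x).const_mul (2:ℝ)
  have h := ((ha.inv h2s).sub (hb.inv h2x))
  have hgg : gg = fun t : ℝ => (2 * Real.sin t)⁻¹ - (2 * t)⁻¹ := by
    funext t; rw [gg]; rw [one_div, one_div]
  rw [hgg]
  refine h.congr_deriv ?_
  field_simp
  ring

lemma deriv_gg_nonneg {x : ℝ} (h0 : 0 < x) (h1 : x ≤ π / 2) :
    0 ≤ 1 / (2 * x ^ 2) - Real.cos x / (2 * Real.sin x ^ 2) := by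
  have hpi := Real.pi_pos
  have hxpi : x < π := by linarith
  have hs : 0 < Real.sin x := Real.sin_pos_of_pos_of_lt_pi h0 hxpi
  rw [sub_nonneg, div_le_div_iff₀ (by positivity) (by positivity)]
  -- cos x * (2 * x ^ 2) ≤ 1 * (2 * sin x ^ 2) or similar; reduce to x^2 * cos x ≤ sin x ^ 2
  have hu0 : 0 < x / 2 := by linarith
  have hu1 : x / 2 < π / 2 := by linarith
  have hc : 0 < Real.cos (x / 2) := Real.cos_pos_of_mem_Ioo ⟨by linarith, hu1⟩
  have hsu : 0 < Real.sin (x / 2) := Real.sin_pos_of_pos_of_lt_pi hu0 (by linarith)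
  have htan : x / 2 < Real.tan (x / 2) := Real.lt_tan hu0 hu1
  have htan' : x / 2 * Real.cos (x / 2) ≤ Real.sin (x / 2) := by
    rw [Real.tan_eq_sin_div_cos, lt_div_iff₀ hc] at htan
    linarith
  have hsle : Real.sin (x / 2) ≤ x / 2 := Real.sin_le (le_of_lt hu0)
  have hx2 : (2:ℝ) * (x / 2) = x := by ring
  have hsinx : Real.sin x = 2 * Real.sin (x / 2) * Real.cos (x / 2) := by
    conv_lhs => rw [← hx2, Real.sin_two_mul]
  have hcosx : Real.cos x = 1 - 2 * Real.sin (x / 2) ^ 2 := by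
    conv_lhs => rw [← hx2, Real.cos_two_mul']
    have := Real.sin_sq_add_cos_sq (x / 2); linarith
  have hpyth := Real.sin_sq_add_cos_sq (x / 2)
  rw [hsinx, hcosx]
  nlinarith [mul_le_mul htan' htan' (by positivity) (le_of_lt hsu),
    mul_le_mul hsle hsle hsu.le (by positivity),
    sq_nonneg (Real.sin (x/2)), sq_nonneg (Real.cos (x/2)), mul_pos hsu hc, sq_nonneg x]

lemma gg_mono : MonotoneOn gg (Set.Ioc 0 (π / 2)) := by
  have hpi := Real.pi_pos
  apply monotoneOn_of_deriv_nonneg (convex_Ioc 0 (π / 2))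
  · intro x hx
    exact (hasDerivAt_gg hx.1 (by have := hx.2; linarith)).continuousAt.continuousWithinAt
  · rw [interior_Ioc]
    intro x hx
    exact (hasDerivAt_gg hx.1 (by have := hx.2; linarith)).differentiableAt.differentiableWithinAt
  · rw [interior_Ioc]
    intro x hx
    rw [(hasDerivAt_gg hx.1 (by have := hx.2; linarith)).deriv]
    exact deriv_gg_nonneg hx.1 hx.2.le

lemma slope_le {x y : ℝ} (hx : 0 < x) (hxy : x ≤ y) (hy : y ≤ π / 2) :
    FF y - FF x ≤ gg y * (y - x) := by
  have hpi := Real.pi_pos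
  have hyI : y ∈ Set.Ioc (0:ℝ) (π/2) := ⟨lt_of_lt_of_le hx hxy, hy⟩
  have key : ∀ t ∈ Set.Icc x y, deriv FF t ≤ gg y := by
    intro t ht
    have ht0 : 0 < t := lt_of_lt_of_le hx ht.1
    have htpi : t < π := by have := ht.2.trans hy; linarith
    rw [(hasDerivAt_FF ht0 htpi).deriv]
    exact gg_mono ⟨ht0, ht.2.trans hy⟩ hyI (ht.2)
  have := (convex_Icc x y).image_sub_le_mul_sub_of_deriv_le
    (f := FF) (C := gg y) ?_ ?_ ?_ x ⟨le_refl x, hxy⟩ y ⟨hxy, le_refl y⟩ hxy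
  · linarith [this]
  · intro t ht
    have ht0 : 0 < t := lt_of_lt_of_le hx ht.1
    have htpi : t < π := by have := ht.2.trans hy; linarith
    exact (hasDerivAt_FF ht0 htpi).continuousAt.continuousWithinAt
  · rw [interior_Icc]
    intro t ht
    have ht0 : 0 < t := lt_of_lt_of_le hx ht.1.le
    have htpi : t < π := by have := ht.2.le.trans hy; linarith
    exact (hasDerivAt_FF ht0 htpi).differentiableAt.differentiableWithinAt
  · rw [interior_Icc]
    intro t ht
    exact key t ⟨ht.1.le, ht.2.le⟩

lemma gg_nonneg {x : ℝ} (h0 : 0 < x) (h1 : x < π) : 0 ≤ gg x := by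
  have hs : 0 < Real.sin x := Real.sin_pos_of_pos_of_lt_pi h0 h1
  have hle : Real.sin x ≤ x := Real.sin_le h0.le
  rw [gg, sub_nonneg]
  apply one_div_le_one_div_of_le (by positivity)
  linarith

lemma gg_def' (x : ℝ) : gg x = 1 / (2 * Real.sin x) - 1 / (2 * x) := rfl

lemma neg_log_cos_le {t : ℝ} (h0 : 0 ≤ t) (h1 : t ≤ 1/2) :
    -Real.log (Real.cos t) ≤ t^2 := by
  have hc1 : 1 - t^2/2 ≤ Real.cos t := Real.one_sub_sq_div_two_le_cos
  have hcpos : 0 < Real.cos t := by nlinarith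
  have h2 := Real.log_le_sub_one_of_pos (x := (Real.cos t)⁻¹) (by positivity)
  rw [Real.log_inv] at h2
  have h3 : (Real.cos t)⁻¹ ≤ 1 + t^2 := by
    rw [inv_le_iff_one_le_mul₀ hcpos]
    have ht2 : t^2 ≤ 1/4 := by nlinarith
    have ht4 : t^4 ≤ t^2 := by nlinarith [sq_nonneg t]
    nlinarith [mul_le_mul_of_nonneg_left hc1 (show (0:ℝ) ≤ 1+t^2 by positivity)]
  linarith

lemma odd_harmonic_sum (k : ℕ) :
    ∑ j ∈ Finset.range k, 1/(2*(j:ℝ)+1)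
      = ((harmonic (2*k) : ℚ) : ℝ) - ((harmonic k : ℚ) : ℝ)/2 := by
  induction k with
  | zero => simp [harmonic_zero]
  | succ n ih =>
    rw [Finset.sum_range_succ, ih]
    have h1 : 2 * (n+1) = (2*n) + 1 + 1 := by ring
    rw [h1, harmonic_succ, harmonic_succ, harmonic_succ]
    push_cast
    have hn1 : (0:ℝ) < 2*(n:ℝ)+1 := by positivity
    have hn2 : (0:ℝ) < (n:ℝ)+1 := by positivity
    field_simp
    ring

lemma harmonic_ge {n : ℕ} (hn : n ≠ 0) :
    Real.log n + Real.eulerMascheroniConstant ≤ ((harmonic n : ℚ) : ℝ) := by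
  have h := Real.eulerMascheroniConstant_lt_eulerMascheroniSeq' n
  rw [Real.eulerMascheroniSeq', if_neg hn] at h
  linarith

lemma harmonic_le (n : ℕ) :
    ((harmonic n : ℚ) : ℝ) ≤ Real.log ((n:ℝ)+1) + Real.eulerMascheroniConstant := by
  have h := Real.eulerMascheroniSeq_lt_eulerMascheroniConstant n
  rw [Real.eulerMascheroniSeq] at h
  linarith

lemma FF_pi_div_two : FF (π/2) = (Real.log 2 - Real.log π)/2 := by
  rw [FF]
  have h : π/2/2 = π/4 := by ring
  rw [h, Real.sin_pi_div_four, Real.cos_pi_div_four,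
    Real.log_div Real.pi_ne_zero two_ne_zero]
  ring

lemma gg_pi_div_two : gg (π/2) = 1/2 - 1/π := by
  have h : 2*(π/2) = π := by ring
  rw [gg_def', Real.sin_pi_div_two, h]
  norm_num

lemma FF_small_le {N : ℝ} (hN : 5 ≤ N) :
    FF (π/(2*N)) ≤ -(Real.log 2)/2 + (π/(4*N))^2/2 := by
  have hπ := Real.pi_pos
  have hπ' := Real.pi_lt_d2
  have hN0 : (0:ℝ) < N := by linarith
  have ha : 0 < π/(2*N) := by positivity
  have ha2 : π/(2*N)/2 = π/(4*N) := by ring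
  have hhalf : π/(4*N) ≤ 1/2 := by
    rw [div_le_iff₀ (by positivity)]
    nlinarith
  have hs : 0 < Real.sin (π/(4*N)) := by
    apply Real.sin_pos_of_pos_of_lt_pi (by positivity)
    rw [div_lt_iff₀ (by positivity)]
    nlinarith
  have h1 : Real.log (Real.sin (π/(4*N))) ≤ Real.log (π/(4*N)) :=
    Real.log_le_log hs (Real.sin_le (by positivity))
  have h2 : -Real.log (Real.cos (π/(4*N))) ≤ (π/(4*N))^2 :=
    neg_log_cos_le (by positivity) hhalf
  have h3 : Real.log (π/(4*N)) = Real.log (π/(2*N)) - Real.log 2 := by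
    rw [show π/(4*N) = (π/(2*N))/2 by ring, Real.log_div (by positivity) two_ne_zero]
  rw [FF, ha2]
  linarith

set_option maxHeartbeats 1000000 in
lemma main_bound (k : ℕ) (hk : 1 ≤ k) :
    ((k:ℝ) / π) * (Real.log k +
        (4*Real.log 2 + Real.eulerMascheroniConstant - Real.log π) - 1/(k:ℝ)) ≤
      ∑ j ∈ Finset.range k, 1 / (2 * Real.cos (((j : ℝ) + 1) * π / (2 * (k:ℝ) + 1))) := by
  have hπ : (0:ℝ) < π := Real.pi_pos
  have hπ315 := Real.pi_lt_d2
  have hπ3 := Real.pi_gt_three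
  have hl2a := Real.log_two_gt_d9
  have hl2b := Real.log_two_lt_d9
  have hga := Real.one_half_lt_eulerMascheroniConstant
  have hga2 := Real.eulerMascheroniConstant_lt_two_thirds
  rcases eq_or_lt_of_le hk with hk1 | hk2
  · -- case k = 1
    subst hk1
    rw [Finset.sum_range_one]
    have harg : (((0:ℕ):ℝ)+1) * π / (2*((1:ℕ):ℝ)+1) = π/3 := by push_cast; ring
    rw [harg, Real.cos_pi_div_three]
    have hlp : (0:ℝ) ≤ Real.log π := Real.log_nonneg (by linarith)
    push_cast
    rw [Real.log_one]
    have hXπ : (0:ℝ) + (4*Real.log 2 + Real.eulerMascheroniConstant - Real.log π) - 1/1 ≤ π := by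
      linarith
    have h1 : (1:ℝ)/π * (0 + (4*Real.log 2 + Real.eulerMascheroniConstant - Real.log π) - 1/1)
        ≤ (1:ℝ)/π * π := mul_le_mul_of_nonneg_left hXπ (by positivity)
    have h2 : (1:ℝ)/π * π = 1 := by field_simp
    have h3 : (1:ℝ)/(2*(1/2:ℝ)) = 1 := by norm_num
    rw [h3]
    linarith
  · -- case 2 ≤ k
    have hk2' : (2:ℝ) ≤ (k:ℝ) := by exact_mod_cast hk2
    have hkpos : (0:ℝ) < (k:ℝ) := by linarith
    have hk0 : (k:ℝ) ≠ 0 := ne_of_gt hkpos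
    set θ : ℕ → ℝ := fun j => (2*(j:ℝ)+1)*π/(2*(2*(k:ℝ)+1)) with hθ
    have hq : (0:ℝ) ≤ (2*(k:ℝ)+1)/π := by positivity
    have hN5 : (5:ℝ) ≤ 2*(k:ℝ)+1 := by linarith
    have hN0 : (0:ℝ) < 2*(k:ℝ)+1 := by linarith
    have hkm : ((k-1:ℕ):ℝ) = (k:ℝ)-1 := by
      rw [Nat.cast_sub hk]; norm_num
    -- Step 1: reflect the sum
    have hsum1 : ∑ j ∈ Finset.range k, 1 / (2 * Real.cos (((j:ℝ)+1)*π/(2*(k:ℝ)+1)))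
        = ∑ j ∈ Finset.range k, 1/(2*Real.sin (θ j)) := by
      rw [← Finset.sum_range_reflect (fun j => 1/(2*Real.sin (θ j))) k]
      refine Finset.sum_congr rfl fun j hj => ?_
      rw [Finset.mem_range] at hj
      have hjc : ((k - 1 - j : ℕ) : ℝ) = (k:ℝ) - 1 - (j:ℝ) := by
        have he : k - 1 - j = k - (j+1) := by omega
        rw [he, Nat.cast_sub hj]
        push_cast; ring
      have harg : θ (k-1-j) = π/2 - ((j:ℝ)+1)*π/(2*(k:ℝ)+1) := by
        simp only [hθ]
        rw [hjc]
        field_simp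
        ring
      rw [harg, Real.sin_pi_div_two_sub]
    -- Step 2: split each term
    have hsplit : ∑ j ∈ Finset.range k, 1/(2*Real.sin (θ j))
        = (2*(k:ℝ)+1)/π * (((harmonic (2*k):ℚ):ℝ) - ((harmonic k:ℚ):ℝ)/2)
          + ∑ j ∈ Finset.range k, gg (θ j) := by
      rw [← odd_harmonic_sum, Finset.mul_sum, ← Finset.sum_add_distrib]
      refine Finset.sum_congr rfl fun j hj => ?_
      have hθj : θ j = (2*(j:ℝ)+1)*π/(2*(2*(k:ℝ)+1)) := by simp only [hθ]
      have hj0 : (0:ℝ) < 2*(j:ℝ)+1 := by positivity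
      have h2 : (2*(k:ℝ)+1)/π * (1/(2*(j:ℝ)+1)) = 1/(2*θ j) := by
        rw [hθj]; field_simp
      rw [gg_def', h2]
      ring
    -- basic facts about θ
    have hθpos : ∀ j : ℕ, 0 < θ j := fun j => by simp only [hθ]; positivity
    have hθle : ∀ j : ℕ, (j:ℝ) ≤ (k:ℝ) - 1 → θ j ≤ π/2 := by
      intro j hj
      simp only [hθ]
      rw [div_le_div_iff₀ (by positivity) (by norm_num)]
      nlinarith
    have hθdiff : ∀ j : ℕ, θ (j+1) - θ j = π/(2*(k:ℝ)+1) := by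
      intro j
      simp only [hθ]
      push_cast
      field_simp
      ring
    -- split off the first term
    have hGsplit : ∑ j ∈ Finset.range k, gg (θ j)
        = (∑ j ∈ Finset.range (k-1), gg (θ (j+1))) + gg (θ 0) := by
      conv_lhs => rw [show k = (k-1)+1 by omega]
      exact Finset.sum_range_succ' _ _
    -- telescoping bound
    have htele : FF (θ (k-1)) - FF (θ 0)
        ≤ (∑ j ∈ Finset.range (k-1), gg (θ (j+1))) * (π/(2*(k:ℝ)+1)) := by
      rw [Finset.sum_mul, ← Finset.sum_range_sub (fun j => FF (θ j)) (k-1)]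
      apply Finset.sum_le_sum
      intro j hj
      rw [Finset.mem_range] at hj
      have hj' : (j:ℝ) + 1 ≤ (k:ℝ) - 1 := by
        have h := (Nat.cast_le (α := ℝ)).mpr (Nat.succ_le_of_lt hj)
        rw [hkm] at h; push_cast at h; linarith
      have hxy : θ j ≤ θ (j+1) := by
        have hd := hθdiff j
        have : 0 < π/(2*(k:ℝ)+1) := by positivity
        linarith
      have hy : θ (j+1) ≤ π/2 := by
        apply hθle (j+1)
        push_cast
        linarith
      have h := slope_le (hθpos j) hxy hy
      rw [hθdiff j] at h
      exact h
    have hG1 : (2*(k:ℝ)+1)/π * (FF (θ (k-1)) - FF (θ 0))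
        ≤ ∑ j ∈ Finset.range (k-1), gg (θ (j+1)) := by
      have h := mul_le_mul_of_nonneg_left htele hq
      have hcancel : (2*(k:ℝ)+1)/π
          * ((∑ j ∈ Finset.range (k-1), gg (θ (j+1))) * (π/(2*(k:ℝ)+1)))
          = ∑ j ∈ Finset.range (k-1), gg (θ (j+1)) := by
        field_simp
      rw [hcancel] at h
      exact h
    -- boundary bound
    have hθm : θ (k-1) = (2*(k:ℝ)-1)*π/(2*(2*(k:ℝ)+1)) := by
      simp only [hθ]; rw [hkm]; ring_nf
    have hbdry : FF (π/2) - FF (θ (k-1)) ≤ (1/2 - 1/π) * (π/(2*(k:ℝ)+1)) := by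
      have h1 : θ (k-1) ≤ π/2 := hθle (k-1) (le_of_eq hkm)
      have h := slope_le (hθpos (k-1)) h1 (le_refl (π/2))
      rw [gg_pi_div_two] at h
      have h2 : π/2 - θ (k-1) = π/(2*(k:ℝ)+1) := by
        rw [hθm]; field_simp; ring
      rw [h2] at h
      exact h
    have hbd2 : (2*(k:ℝ)+1)/π * ((Real.log 2 - Real.log π)/2 - FF (θ (k-1)))
        ≤ 1/2 - 1/π := by
      have h := mul_le_mul_of_nonneg_left hbdry hq
      have hcancel : (2*(k:ℝ)+1)/π * ((1/2 - 1/π)*(π/(2*(k:ℝ)+1))) = 1/2 - 1/π := by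
        field_simp
      rw [hcancel, FF_pi_div_two] at h
      exact h
    -- FF (θ 0) bound
    have hθ0 : θ 0 = π/(2*(2*(k:ℝ)+1)) := by simp only [hθ]; norm_num
    have hFF0 : FF (θ 0) ≤ -(Real.log 2)/2 + (π/(4*(2*(k:ℝ)+1)))^2/2 := by
      rw [hθ0]; exact FF_small_le hN5
    have hm1 : (2*(k:ℝ)+1)/π * FF (θ 0)
        ≤ (2*(k:ℝ)+1)/π * (-(Real.log 2)/2) + 1/48 := by
      have h := mul_le_mul_of_nonneg_left hFF0 hq
      have heq : (2*(k:ℝ)+1)/π * ((π/(4*(2*(k:ℝ)+1)))^2/2) = π/(32*(2*(k:ℝ)+1)) := by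
        field_simp; ring
      have h48 : π/(32*(2*(k:ℝ)+1)) ≤ 1/48 := by
        rw [div_le_div_iff₀ (by positivity) (by norm_num)]
        nlinarith
      linarith [h, heq, h48]
    -- harmonic bounds
    have hb1 : Real.log (2*(k:ℝ)) + Real.eulerMascheroniConstant
        ≤ ((harmonic (2*k):ℚ):ℝ) := by
      have h := harmonic_ge (n := 2*k) (by omega)
      have hc : ((2*k:ℕ):ℝ) = 2*(k:ℝ) := by push_cast; ring
      rwa [hc] at h
    have hb2 := harmonic_le k
    have hlog2k : Real.log (2*(k:ℝ)) = Real.log 2 + Real.log (k:ℝ) :=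
      Real.log_mul two_ne_zero hk0
    have hH : (2*(k:ℝ)+1)/π * (Real.log 2 + Real.log (k:ℝ) + Real.eulerMascheroniConstant
          - (Real.log ((k:ℝ)+1) + Real.eulerMascheroniConstant)/2)
        ≤ (2*(k:ℝ)+1)/π * (((harmonic (2*k):ℚ):ℝ) - ((harmonic k:ℚ):ℝ)/2) := by
      apply mul_le_mul_of_nonneg_left _ hq
      linarith
    -- log (k+1) bounds
    have he1 : Real.log ((k:ℝ)+1) ≤ Real.log (k:ℝ) + 1/(k:ℝ) := by
      have h := Real.log_le_sub_one_of_pos (x := ((k:ℝ)+1)/(k:ℝ)) (by positivity)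
      rw [Real.log_div (by positivity) hk0] at h
      have h2 : ((k:ℝ)+1)/(k:ℝ) - 1 = 1/(k:ℝ) := by field_simp; ring
      linarith
    have hke : ((k:ℝ)/π) * Real.log ((k:ℝ)+1) ≤ ((k:ℝ)/π) * Real.log (k:ℝ) + 1/π := by
      have h := mul_le_mul_of_nonneg_left he1 (show (0:ℝ) ≤ (k:ℝ)/π by positivity)
      have hc : ((k:ℝ)/π) * (1/(k:ℝ)) = 1/π := by field_simp
      linarith [h, hc]
    have hse : (1/π) * Real.log ((k:ℝ)+1) ≤ (1/π)*Real.log (k:ℝ) + (1/π)*(1/2) := by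
      have h1 : 1/(k:ℝ) ≤ 1/2 := by
        rw [div_le_div_iff₀ hkpos (by norm_num)]; linarith
      have he2 : Real.log ((k:ℝ)+1) ≤ Real.log (k:ℝ) + 1/2 := by linarith
      have h := mul_le_mul_of_nonneg_left he2 (show (0:ℝ) ≤ 1/π by positivity)
      linarith [h]
    -- numeric product bounds
    have hlk2 : Real.log 2 ≤ Real.log (k:ℝ) := Real.log_le_log (by norm_num) (by linarith)
    have hslk : (1/π)*Real.log 2 ≤ (1/π)*Real.log (k:ℝ) :=
      mul_le_mul_of_nonneg_left hlk2 (by positivity)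
    have hlp4 : Real.log π ≤ 2*Real.log 2 := by
      have h4 : Real.log π ≤ Real.log 4 := Real.log_le_log hπ (by linarith)
      have h5 : Real.log 4 = 2*Real.log 2 := by
        rw [show (4:ℝ) = 2^(2:ℕ) by norm_num, Real.log_pow]; push_cast; ring
      linarith
    have hslp : (1/π)*Real.log π ≤ (1/π)*(2*Real.log 2) :=
      mul_le_mul_of_nonneg_left hlp4 (by positivity)
    have hsga : (1/π)*(1/2) ≤ (1/π)*Real.eulerMascheroniConstant :=
      mul_le_mul_of_nonneg_left hga.le (by positivity)
    have hsl2 : (1/π)*(0.6931:ℝ) ≤ (1/π)*Real.log 2 :=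
      mul_le_mul_of_nonneg_left (by linarith) (by positivity)
    have hπinv : (1:ℝ)/(3.15) ≤ 1/π := by
      rw [div_le_div_iff₀ (by norm_num) hπ]; linarith
    have hπinv2 : (1:ℝ)/π ≤ 1/3 := by
      rw [div_le_div_iff₀ hπ (by norm_num)]; linarith
    have hrk : ((k:ℝ)/π)*(1/(k:ℝ)) = 1/π := by field_simp
    have hgg0 : 0 ≤ gg (θ 0) := by
      apply gg_nonneg (hθpos 0)
      have := hθle 0 (by push_cast; linarith)
      linarith
    rw [hsum1, hsplit, hGsplit]
    set G1 := ∑ j ∈ Finset.range (k-1), gg (θ (j+1)) with hG1def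
    set g0 := gg (θ 0) with hg0def
    set Fm := FF (θ (k-1)) with hFmdef
    set F0 := FF (θ 0) with hF0def
    set H2 := ((harmonic (2*k):ℚ):ℝ) with hH2def
    set H1 := ((harmonic k:ℚ):ℝ) with hH1def
    ring_nf at hH hG1 hbd2 hm1 hke hse hslk hslp hsga hsl2 hπinv hπinv2 hrk hgg0 ⊢
    linarith [hH, hG1, hbd2, hm1, hke, hse, hslk, hslp, hsga, hsl2, hπinv, hπinv2, hrk, hgg0]

theorem sum_sec_lower_bound (k : ℕ) (hk : 1 ≤ k) :
    (k / π) * (Real.log k + Real.log (16 * Real.exp Real.eulerMascheroniConstant / π) - 1 / k) ≤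
      ∑ j ∈ Finset.range k, 1 / (2 * Real.cos (((j : ℝ) + 1) * π / (2 * k + 1))) ∧
    (k / π) * Real.log (k / (2 ^ (-(4 : ℤ)) * Real.exp (-Real.eulerMascheroniConstant) * π)) -
        1 / π ≤
      ∑ j ∈ Finset.range k, 1 / (2 * Real.cos (((j : ℝ) + 1) * π / (2 * k + 1))) := by
  have hπ : (0:ℝ) < π := Real.pi_pos
  have hkpos : (0:ℝ) < (k:ℝ) := by exact_mod_cast Nat.pos_of_ne_zero (by omega)
  have hk0 : (k:ℝ) ≠ 0 := ne_of_gt hkpos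
  have hmain := main_bound k hk
  have hL : Real.log (16 * Real.exp Real.eulerMascheroniConstant / π)
      = 4*Real.log 2 + Real.eulerMascheroniConstant - Real.log π := by
    rw [Real.log_div (by positivity) (ne_of_gt hπ),
      Real.log_mul (by norm_num) (Real.exp_ne_zero _),
      Real.log_exp, show (16:ℝ) = 2^(4:ℕ) by norm_num, Real.log_pow]
    push_cast; ring
  constructor
  · rw [hL]; exact hmain
  · have hc0 : Real.log ((k:ℝ) / (2^(-(4:ℤ)) * Real.exp (-Real.eulerMascheroniConstant) * π))
        = Real.log k + (4*Real.log 2 + Real.eulerMascheroniConstant - Real.log π) := by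
      rw [Real.log_div hk0 (by positivity),
          Real.log_mul (by positivity) (ne_of_gt hπ),
          Real.log_mul (by positivity) (Real.exp_ne_zero _),
          Real.log_exp, Real.log_zpow]
      push_cast; ring
    rw [hc0]
    have hsub : ((k:ℝ)/π) * (Real.log k
          + (4*Real.log 2 + Real.eulerMascheroniConstant - Real.log π) - 1/(k:ℝ))
        = ((k:ℝ)/π) * (Real.log k
          + (4*Real.log 2 + Real.eulerMascheroniConstant - Real.log π)) - 1/π := by
      field_simp
    linarith [hmain, hsub]
end

section
/- For all n ∈ ℕ with n ≥ 1, the harmonic number H_n satisfies 1/(2n + 2/5) < H_n - log n - γ < 1/(2n + 1/3), where γ is the Euler–Mascheroni constant. Consequently H_{2n} - (1/2)H_n ≥ (1/2)(log(4n) + γ). -/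
open Real Filter Topology

-- Lower bound: 2x + 2x^3/3 < log(1+x) - log(1-x) on (0,1)
lemma log_ratio_gt (x : ℝ) (hx0 : 0 < x) (hx1 : x < 1) :
    2*x + 2*x^3/3 < Real.log (1+x) - Real.log (1-x) := by
  set F : ℝ → ℝ := fun y => Real.log (1+y) - Real.log (1-y) - 2*y - 2*y^3/3 with hF
  have hderiv : ∀ y ∈ Set.Ico (0:ℝ) 1,
      HasDerivAt F (1/(1+y) + 1/(1-y) - 2 - 2*y^2) y := by
    intro y hy
    have h1y : (0:ℝ) < 1 + y := by linarith [hy.1]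
    have h2y : (0:ℝ) < 1 - y := by linarith [hy.2]
    have d1 : HasDerivAt (fun y : ℝ => Real.log (1+y)) (1/(1+y)) y := by
      have := ((hasDerivAt_id y).const_add 1).log (ne_of_gt h1y)
      simpa using this
    have d2 : HasDerivAt (fun y : ℝ => Real.log (1-y)) ((-1)/(1-y)) y := by
      have := ((hasDerivAt_id y).const_sub 1).log (ne_of_gt h2y)
      simpa using this
    have d3 : HasDerivAt (fun y : ℝ => 2*y) 2 y := by
      simpa using (hasDerivAt_id y).const_mul 2
    have d4 : HasDerivAt (fun y : ℝ => 2*y^3/3) (2*y^2) y := by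
      have := (hasDerivAt_pow 3 y).const_mul 2 |>.div_const 3
      refine this.congr_deriv ?_
      push_cast; ring
    have := ((d1.sub d2).sub d3).sub d4
    refine this.congr_deriv ?_
    field_simp
    ring
  have hmono : StrictMonoOn F (Set.Ico (0:ℝ) 1) := by
    apply strictMonoOn_of_deriv_pos (convex_Ico 0 1)
    · exact fun y hy => (hderiv y hy).continuousAt.continuousWithinAt
    · intro y hy
      rw [interior_Ico] at hy
      rw [(hderiv y ⟨le_of_lt hy.1, hy.2⟩).deriv]
      have h1y : (0:ℝ) < 1 + y := by linarith [hy.1]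
      have h2y : (0:ℝ) < 1 - y := by linarith [hy.2]
      have e : 1/(1+y) + 1/(1-y) - 2 - 2*y^2 = 2*y^4/((1+y)*(1-y)) := by
        field_simp
        ring
      rw [e]
      exact div_pos (by nlinarith [pow_pos hy.1 4]) (by nlinarith [pow_pos (mul_pos h1y h2y) 2])
  have h0 : F 0 = 0 := by simp [hF]
  have := hmono (Set.mem_Ico.2 ⟨le_refl 0, one_pos⟩)
      (Set.mem_Ico.2 ⟨le_of_lt hx0, hx1⟩) hx0
  rw [h0] at this
  simp only [hF] at this
  linarith

-- Upper bound: log(1+x) - log(1-x) < 2x + 2x^3/(3(1-x^2)) on (0,1)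
lemma log_ratio_lt (x : ℝ) (hx0 : 0 < x) (hx1 : x < 1) :
    Real.log (1+x) - Real.log (1-x) < 2*x + 2*x^3/(3*(1-x^2)) := by
  set G : ℝ → ℝ := fun y => 2*y + 2*y^3/(3*(1-y^2)) - (Real.log (1+y) - Real.log (1-y)) with hG
  have hderiv : ∀ y ∈ Set.Ico (0:ℝ) 1,
      HasDerivAt G (2 + (6*y^2*(3*(1-y^2)) - 2*y^3*(-6*y))/(3*(1-y^2))^2
        - (1/(1+y) - (-1)/(1-y))) y := by
    intro y hy
    have h1y : (0:ℝ) < 1 + y := by linarith [hy.1]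
    have h2y : (0:ℝ) < 1 - y := by linarith [hy.2]
    have hden : (3:ℝ)*(1-y^2) ≠ 0 := by nlinarith
    have d1 : HasDerivAt (fun y : ℝ => Real.log (1+y)) (1/(1+y)) y := by
      have := ((hasDerivAt_id y).const_add 1).log (ne_of_gt h1y)
      simpa using this
    have d2 : HasDerivAt (fun y : ℝ => Real.log (1-y)) ((-1)/(1-y)) y := by
      have := ((hasDerivAt_id y).const_sub 1).log (ne_of_gt h2y)
      simpa using this
    have d3 : HasDerivAt (fun y : ℝ => 2*y) 2 y := by
      simpa using (hasDerivAt_id y).const_mul 2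
    have du : HasDerivAt (fun y : ℝ => 2*y^3) (6*y^2) y := by
      have := (hasDerivAt_pow 3 y).const_mul 2
      refine this.congr_deriv ?_
      push_cast; ring
    have dv : HasDerivAt (fun y : ℝ => 3*(1-y^2)) (-6*y) y := by
      have := ((hasDerivAt_pow 2 y).const_sub 1).const_mul 3
      refine this.congr_deriv ?_
      push_cast; ring
    have dfrac := du.div dv hden
    have := (d3.add dfrac).sub (d1.sub d2)
    exact this
  have hmono : StrictMonoOn G (Set.Ico (0:ℝ) 1) := by
    apply strictMonoOn_of_deriv_pos (convex_Ico 0 1)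
    · exact fun y hy => (hderiv y hy).continuousAt.continuousWithinAt
    · intro y hy
      rw [interior_Ico] at hy
      rw [(hderiv y ⟨le_of_lt hy.1, hy.2⟩).deriv]
      have h1y : (0:ℝ) < 1 + y := by linarith [hy.1]
      have h2y : (0:ℝ) < 1 - y := by linarith [hy.2]
      have h12 : (1:ℝ) - y^2 ≠ 0 := by nlinarith
      have e : 2 + (6*y^2*(3*(1-y^2)) - 2*y^3*(-6*y))/(3*(1-y^2))^2
          - (1/(1+y) - (-1)/(1-y)) = 4*y^4/(3*((1+y)*(1-y))^2) := by
        field_simp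
        ring
      rw [e]
      exact div_pos (by nlinarith [pow_pos hy.1 4]) (by nlinarith [pow_pos (mul_pos h1y h2y) 2])
  have h0 : G 0 = 0 := by simp [hG]
  have := hmono (Set.mem_Ico.2 ⟨le_refl 0, one_pos⟩)
      (Set.mem_Ico.2 ⟨le_of_lt hx0, hx1⟩) hx0
  rw [h0] at this
  simp only [hG] at this
  linarith

lemma log_split (t : ℝ) (ht : 1 ≤ t) :
    Real.log (t+1) - Real.log t
      = Real.log (1+1/(2*t+1)) - Real.log (1-1/(2*t+1)) := by
  have h0 : (0:ℝ) < t := by linarith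
  have h1 : (0:ℝ) < 2*t+1 := by linarith
  have e1 : (1:ℝ)+1/(2*t+1) = (2*t+2)/(2*t+1) := by field_simp; ring
  have e2 : (1:ℝ)-1/(2*t+1) = (2*t)/(2*t+1) := by field_simp; ring
  rw [e1, e2, Real.log_div (by linarith) (by linarith),
      Real.log_div (by linarith) (by linarith),
      show (2*t+2 : ℝ) = 2*(t+1) by ring,
      Real.log_mul two_ne_zero (by linarith),
      Real.log_mul two_ne_zero (by linarith)]
  ring

lemma step_upper (t : ℝ) (ht : 1 ≤ t) :
    Real.log (t+1) - Real.log t < 1/(t+1) + 1/(2*t+1/3) - 1/(2*t+7/3) := by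
  have h0 : (0:ℝ) < t := by linarith
  have h1 : (0:ℝ) < 2*t+1 := by linarith
  have hx0 : (0:ℝ) < 1/(2*t+1) := by positivity
  have hx1 : 1/(2*t+1) < 1 := by rw [div_lt_one h1]; linarith
  have h := log_ratio_lt (1/(2*t+1)) hx0 hx1
  rw [← log_split t ht] at h
  have hsq : (1:ℝ) - (1/(2*t+1))^2 = (4*t^2+4*t)/(2*t+1)^2 := by
    field_simp; ring
  have hne : (1:ℝ) - (1/(2*t+1))^2 ≠ 0 := by
    rw [hsq]; positivity
  have key : 2*(1/(2*t+1)) + 2*(1/(2*t+1))^3/(3*(1-(1/(2*t+1))^2))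
      ≤ 1/(t+1) + 1/(2*t+1/3) - 1/(2*t+7/3) := by
    rw [← sub_nonneg]
    have e : 1/(t+1) + 1/(2*t+1/3) - 1/(2*t+7/3)
        - (2*(1/(2*t+1)) + 2*(1/(2*t+1))^3/(3*(1-(1/(2*t+1))^2)))
        = (4*t^2 + (22/9)*t - 14/9)
          / ((t+1)*(2*t+1/3)*(2*t+7/3)*(2*t+1)*(12*t^2+12*t)) := by
      rw [hsq]
      field_simp
      ring
    rw [e]
    apply div_nonneg (by nlinarith)
    have hD : (0:ℝ) < (t+1)*(2*t+1/3)*(2*t+7/3)*(2*t+1)*(12*t^2+12*t) := by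
      apply mul_pos; apply mul_pos; apply mul_pos; apply mul_pos
      all_goals nlinarith
    linarith
  linarith

lemma step_lower (t : ℝ) (ht : 1 ≤ t) :
    1/(t+1) + 1/(2*t+2/5) - 1/(2*t+12/5) < Real.log (t+1) - Real.log t := by
  have h0 : (0:ℝ) < t := by linarith
  have h1 : (0:ℝ) < 2*t+1 := by linarith
  have hx0 : (0:ℝ) < 1/(2*t+1) := by positivity
  have hx1 : 1/(2*t+1) < 1 := by rw [div_lt_one h1]; linarith
  have h := log_ratio_gt (1/(2*t+1)) hx0 hx1
  rw [← log_split t ht] at h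
  have key : 1/(t+1) + 1/(2*t+2/5) - 1/(2*t+12/5)
      ≤ 2*(1/(2*t+1)) + 2*(1/(2*t+1))^3/3 := by
    rw [← sub_nonneg]
    have e : 2*(1/(2*t+1)) + 2*(1/(2*t+1))^3/3
        - (1/(t+1) + 1/(2*t+2/5) - 1/(2*t+12/5))
        = ((16/5)*t^3 + (48/25)*t^2 - (14/25)*t - 6/5)
          / (3*(t+1)*(2*t+2/5)*(2*t+12/5)*(2*t+1)^3) := by
      field_simp
      ring
    rw [e]
    apply div_nonneg (by nlinarith)
    have hD : (0:ℝ) < 3*(t+1)*(2*t+2/5)*(2*t+12/5)*(2*t+1)^3 := by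
      apply mul_pos; apply mul_pos; apply mul_pos; apply mul_pos
      · norm_num
      all_goals positivity
    linarith
  linarith

noncomputable def fseq (n : ℕ) : ℝ :=
  (harmonic n : ℝ) - Real.log n - 1/(2*(n:ℝ) + 1/3)
noncomputable def gseq (n : ℕ) : ℝ :=
  (harmonic n : ℝ) - Real.log n - 1/(2*(n:ℝ) + 2/5)

lemma harmonic_cast_succ (n : ℕ) :
    (harmonic (n+1) : ℝ) = (harmonic n : ℝ) + 1/((n:ℝ)+1) := by
  rw [harmonic_succ]; push_cast; ring

lemma fseq_step (n : ℕ) (hn : 1 ≤ n) : fseq n < fseq (n+1) := by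
  have ht : (1:ℝ) ≤ (n:ℝ) := by exact_mod_cast hn
  have h := step_upper (n:ℝ) ht
  simp only [fseq, harmonic_cast_succ]
  push_cast
  rw [show 2*((n:ℝ)+1)+1/3 = 2*(n:ℝ)+7/3 from by ring]
  linarith [h]

lemma gseq_step (n : ℕ) (hn : 1 ≤ n) : gseq (n+1) < gseq n := by
  have ht : (1:ℝ) ≤ (n:ℝ) := by exact_mod_cast hn
  have h := step_lower (n:ℝ) ht
  simp only [gseq, harmonic_cast_succ]
  push_cast
  rw [show 2*((n:ℝ)+1)+2/5 = 2*(n:ℝ)+12/5 from by ring]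
  linarith [h]

lemma tendsto_aux (c : ℝ) (hc : 0 < c) :
    Tendsto (fun n : ℕ => 1/(2*(n:ℝ) + c)) atTop (𝓝 0) := by
  have h : Tendsto (fun n : ℕ => 2*(n:ℝ) + c) atTop atTop :=
    tendsto_atTop_add_const_right _ _
      ((tendsto_natCast_atTop_atTop).const_mul_atTop two_pos)
  simpa [one_div, Function.comp_def] using tendsto_inv_atTop_zero.comp h

lemma fseq_tendsto : Tendsto fseq atTop (𝓝 Real.eulerMascheroniConstant) := by
  have := Real.tendsto_harmonic_sub_log.sub (tendsto_aux (1/3) (by norm_num))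
  rw [sub_zero] at this
  exact this.congr fun n => rfl

lemma gseq_tendsto : Tendsto gseq atTop (𝓝 Real.eulerMascheroniConstant) := by
  have := Real.tendsto_harmonic_sub_log.sub (tendsto_aux (2/5) (by norm_num))
  rw [sub_zero] at this
  exact this.congr fun n => rfl

lemma fseq_lt_gamma (n : ℕ) (hn : 1 ≤ n) : fseq n < Real.eulerMascheroniConstant := by
  have hmono : Monotone (fun m => fseq (m + (n+1))) := by
    apply monotone_nat_of_le_succ
    intro m
    have h := (fseq_step (m + (n+1)) (by omega)).le
    rw [show m + (n+1) + 1 = m + 1 + (n+1) from by omega] at h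
    exact h
  have htend : Tendsto (fun m => fseq (m + (n+1))) atTop
      (𝓝 Real.eulerMascheroniConstant) :=
    fseq_tendsto.comp (tendsto_add_atTop_nat (n+1))
  have h1 : fseq (0 + (n+1)) ≤ Real.eulerMascheroniConstant :=
    hmono.ge_of_tendsto htend 0
  rw [Nat.zero_add] at h1
  exact lt_of_lt_of_le (fseq_step n hn) h1

lemma gamma_lt_gseq (n : ℕ) (hn : 1 ≤ n) : Real.eulerMascheroniConstant < gseq n := by
  have hanti : Antitone (fun m => gseq (m + (n+1))) := by
    apply antitone_nat_of_succ_le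
    intro m
    have h := (gseq_step (m + (n+1)) (by omega)).le
    rw [show m + (n+1) + 1 = m + 1 + (n+1) from by omega] at h
    exact h
  have htend : Tendsto (fun m => gseq (m + (n+1))) atTop
      (𝓝 Real.eulerMascheroniConstant) :=
    gseq_tendsto.comp (tendsto_add_atTop_nat (n+1))
  have h1 : Real.eulerMascheroniConstant ≤ gseq (0 + (n+1)) :=
    hanti.le_of_tendsto htend 0
  rw [Nat.zero_add] at h1
  exact lt_of_le_of_lt h1 (gseq_step n hn)

theorem harmonic_number_bounds :
    ∀ n : ℕ, 1 ≤ n →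
      (1 / (2 * (n : ℝ) + 2 / 5) < (harmonic n : ℝ) - Real.log n -
          Real.eulerMascheroniConstant ∧
        (harmonic n : ℝ) - Real.log n - Real.eulerMascheroniConstant <
          1 / (2 * (n : ℝ) + 1 / 3)) ∧
      (1 / 2) * (Real.log (4 * n) + Real.eulerMascheroniConstant) ≤
        (harmonic (2 * n) : ℝ) - (1 / 2) * (harmonic n : ℝ) := by
  intro n hn
  have hn1 : (1:ℝ) ≤ (n:ℝ) := by exact_mod_cast hn
  have hn0 : (0:ℝ) < (n:ℝ) := by linarith
  have hg := gamma_lt_gseq n hn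
  have hf := fseq_lt_gamma n hn
  simp only [gseq] at hg
  simp only [fseq] at hf
  refine ⟨⟨by linarith, by linarith⟩, ?_⟩
  have h2n := gamma_lt_gseq (2*n) (by omega)
  simp only [gseq] at h2n
  push_cast at h2n
  have l2 : Real.log (2*(n:ℝ)) = Real.log 2 + Real.log n :=
    Real.log_mul two_ne_zero (ne_of_gt hn0)
  have l4 : Real.log (4*(n:ℝ)) = Real.log 2 + (Real.log 2 + Real.log n) := by
    rw [show (4:ℝ)*(n:ℝ) = 2*(2*(n:ℝ)) by ring,
      Real.log_mul two_ne_zero (by linarith), l2]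
  rw [l2, show 2*(2*(n:ℝ))+2/5 = 4*(n:ℝ)+2/5 from by ring] at h2n
  have hq : (1/2)*(1/(2*(n:ℝ)+1/3)) = 1/(4*(n:ℝ)+2/3) := by
    rw [div_mul_div_comm, one_mul]
    congr 1
    ring
  have hcomp : (1:ℝ)/(4*(n:ℝ)+2/3) ≤ 1/(4*(n:ℝ)+2/5) := by
    apply one_div_le_one_div_of_le <;> linarith
  rw [l4]
  linarith
end
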